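/- Let f : [0,1] → ℝ be continuously differentiable and nonincreasing with f(0) = 1 and f(1) ≥ 0, and let α(t) = 1 - e^(t-1). Then -∫₀¹ α(t)·f'(t) dt + ∫₀¹ (1 - α(t))·f(t) dt ≥ 1 - 1/e. -/

import Mathlib

theorem normalized_residual_bound (f f' : ℝ → ℝ)
    (hderiv : ∀ t ∈ Set.Icc (0:ℝ) 1, HasDerivAt f (f' t) t)
    (hcont : ContinuousOn f' (Set.Icc (0:ℝ) 1))
    (hmono : ∀ s ∈ Set.Icc (0:ℝ) 1, ∀ t ∈ Set.Icc (0:ℝ) 1, s ≤ t → f t ≤ f s)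
    (hf0 : f 0 = 1) (hf1 : 0 ≤ f 1)
    (α : ℝ → ℝ) (hα : α = fun t => 1 - Real.exp (t - 1)) :
    (-∫ t in (0:ℝ)..1, α t * f' t) + (∫ t in (0:ℝ)..1, (1 - α t) * f t)
      ≥ 1 - 1 / Real.exp 1 := by
  subst hα
  have hIcc : Set.uIcc (0:ℝ) 1 = Set.Icc 0 1 := by
    rw [Set.uIcc_of_le]; norm_num
  have hα' : ∀ x ∈ Set.uIcc (0:ℝ) 1,
      HasDerivAt (fun t => 1 - Real.exp (t - 1)) (-Real.exp (x - 1)) x := by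
    intro x _
    have h1 : HasDerivAt (fun t : ℝ => t - 1) 1 x := (hasDerivAt_id x).sub_const 1
    have := (Real.hasDerivAt_exp (x - 1)).comp x h1
    exact ((hasDerivAt_const x (1:ℝ)).sub (by simpa [Function.comp_def] using this)).congr_deriv (by ring)
  have hfd : ∀ x ∈ Set.uIcc (0:ℝ) 1, HasDerivAt f (f' x) x := by
    rw [hIcc]; exact hderiv
  have hfc : ContinuousOn f (Set.Icc (0:ℝ) 1) := fun x hx =>
    (hderiv x hx).continuousAt.continuousWithinAt
  have hfint : IntervalIntegrable f MeasureTheory.volume 0 1 := by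
    apply ContinuousOn.intervalIntegrable; rwa [hIcc]
  have hf'int : IntervalIntegrable f' MeasureTheory.volume 0 1 := by
    apply ContinuousOn.intervalIntegrable; rwa [hIcc]
  have hibp := intervalIntegral.integral_mul_deriv_eq_deriv_mul hα' hfd
    (by apply ContinuousOn.intervalIntegrable; rw [hIcc]
        exact ((Real.continuous_exp.comp (continuous_id.sub continuous_const)).neg.continuousOn :
          ContinuousOn (fun x : ℝ => -Real.exp (x - 1)) _)) hf'int
  rw [hibp]
  have h2 : (∫ t in (0:ℝ)..1, (1 - (1 - Real.exp (t - 1))) * f t)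
      = ∫ t in (0:ℝ)..1, Real.exp (t - 1) * f t := by
    congr 1; ext t; ring
  have h3 : (∫ t in (0:ℝ)..1, -Real.exp (t - 1) * f t)
      = -∫ t in (0:ℝ)..1, Real.exp (t - 1) * f t := by
    rw [← intervalIntegral.integral_neg]; congr 1; ext t; ring
  rw [h2, h3, hf0]
  simp only [sub_self, Real.exp_zero]
  ring_nf
  rw [Real.exp_neg]
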